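/- Let η and N_X be real random variables on a probability space and let α_X, β, λ_E, λ_X be real constants with α_X ≠ 0. For each a ∈ ℝ define the predictor R_a = λ_E·η + λ_X·(α_X·a + β·η + N_X). Then the law of R_a is the same for all a ∈ ℝ if and only if λ_X = 0. -/

import Mathlib

open MeasureTheory ProbabilityTheory Filter

private lemma no_shift_invariant (μ : Measure ℝ) [IsProbabilityMeasure μ] (c : ℝ)
    (hc : 0 < c) (h : ∀ x, cdf μ (x + c) = cdf μ x) : False := by
  have h1 : ∀ (n : ℕ) (x : ℝ), cdf μ (x + n * c) = cdf μ x := by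
    intro n
    induction n with
    | zero => simp
    | succ k ih =>
      intro x
      have : x + (k + 1 : ℕ) * c = (x + k * c) + c := by push_cast; ring
      rw [this, h, ih]
  have h2 : ∀ (n : ℕ) (x : ℝ), cdf μ (x - n * c) = cdf μ x := by
    intro n x
    have := h1 n (x - n * c)
    rw [sub_add_cancel] at this
    exact this.symm
  -- cdf μ 0 = 1
  have htop : Tendsto (fun n : ℕ => (0 : ℝ) + n * c) atTop atTop := by
    simpa using (tendsto_natCast_atTop_atTop (R := ℝ)).atTop_mul_const hc
  have hone : cdf μ 0 = 1 := by
    have := (tendsto_cdf_atTop μ).comp htop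
    have heq : (fun n : ℕ => cdf μ ((0 : ℝ) + n * c)) = fun _ => cdf μ 0 := by
      funext n; simpa using h1 n 0
    rw [show ((cdf μ) ∘ fun n : ℕ => (0 : ℝ) + n * c) = fun _ => cdf μ 0 from heq] at this
    exact tendsto_nhds_unique tendsto_const_nhds this
  have hbot : Tendsto (fun n : ℕ => (0 : ℝ) - n * c) atTop atBot := by
    have := (tendsto_natCast_atTop_atTop (R := ℝ)).atTop_mul_const hc
    have := tendsto_neg_atTop_atBot.comp this
    simpa [Function.comp_def, zero_sub] using this
  have hzero : cdf μ 0 = 0 := by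
    have := (tendsto_cdf_atBot μ).comp hbot
    have heq : ((cdf μ) ∘ fun n : ℕ => (0 : ℝ) - n * c) = fun _ => cdf μ 0 := by
      funext n; simpa using h2 n 0
    rw [heq] at this
    exact tendsto_nhds_unique tendsto_const_nhds this
  rw [hone] at hzero
  exact one_ne_zero hzero

/-- **Unresolved-discrimination example (Section 4.2).**
For the predictor `R a = λE * η + λX * (αX * a + β * η + NX)` with `αX ≠ 0`,
the law of `R a` is the same for all `a` iff `λX = 0`. -/
theorem unresolved_nondiscrimination_constraint_linear
    {Ω : Type*} [MeasureSpace Ω] [IsProbabilityMeasure (ℙ : Measure Ω)]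
    (η NX : Ω → ℝ) (hη : Measurable η) (hNX : Measurable NX)
    (αX β lamE lamX : ℝ) (hαX : αX ≠ 0)
    (R : ℝ → Ω → ℝ)
    (hR : ∀ a ω, R a ω = lamE * η ω + lamX * (αX * a + β * η ω + NX ω)) :
    (∀ a a' : ℝ, Measure.map (R a) (ℙ : Measure Ω) = Measure.map (R a') (ℙ : Measure Ω))
      ↔ lamX = 0 := by
  constructor
  · intro hlaw
    by_contra hlam
    set c : ℝ := lamX * αX with hc
    have hcne : c ≠ 0 := mul_ne_zero hlam hαX
    set Z : Ω → ℝ := R 0 with hZ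
    have hZm : Measurable Z := by
      have : Z = fun ω => lamE * η ω + lamX * (αX * 0 + β * η ω + NX ω) := by
        funext ω; exact hR 0 ω
      rw [this]
      fun_prop
    have hRa : ∀ a, R a = fun ω => Z ω + c * a := by
      intro a; funext ω; rw [hR a ω, hZ]; simp only [hR 0 ω]; ring
    set μ : Measure ℝ := Measure.map Z ℙ with hμ
    have : IsProbabilityMeasure μ := Measure.isProbabilityMeasure_map hZm.aemeasurable
    -- shift invariance with d = |c|
    set a₀ : ℝ := |c| / c with ha₀
    have hd : c * a₀ = |c| := by
      rw [ha₀, mul_div_cancel₀ _ hcne]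
    have habs : (0:ℝ) < |c| := abs_pos.mpr hcne
    have hmap : μ.map (· + |c|) = μ := by
      have h0 := hlaw a₀ 0
      rw [hRa a₀, hRa 0] at h0
      simp only [mul_zero, add_zero] at h0
      calc μ.map (· + |c|) = Measure.map ((· + |c|) ∘ Z) ℙ := by
            rw [hμ, Measure.map_map (measurable_add_const _) hZm]
        _ = Measure.map (fun ω => Z ω + c * a₀) ℙ := by rw [hd]; rfl
        _ = μ := h0
    have hcdf : ∀ x, cdf μ (x + |c|) = cdf μ x := by
      intro x
      have hIic : μ (Set.Iic (x + |c|)) = μ (Set.Iic x) := by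
        conv_lhs => rw [← hmap]
        rw [Measure.map_apply (measurable_add_const _) measurableSet_Iic]
        congr 1
        ext y
        simp [Set.mem_preimage, Set.mem_Iic]
      rw [cdf_eq_real, cdf_eq_real, measureReal_def, measureReal_def, hIic]
    exact no_shift_invariant μ |c| habs hcdf
  · intro h a a'
    have : R a = R a' := by
      funext ω; rw [hR, hR, h]; ring
    rw [this]
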